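/- Let q be a complex number with |q| = 1, let (V₁,V₂) be a q-commutative pair of isometries on a complex Hilbert space H, and set V = V₁V₂. Then for every h ∈ H one has ‖D_{V*}h‖² = ‖D_{V₁*}V₂*h‖² + ‖D_{V₂*}h‖² = ‖D_{V₁*}h‖² + ‖D_{V₂*}V₁*h‖², and the map D_{V*}h ↦ (D_{V₁*}h, D_{V₂*}V₁*h) extends to a well-defined surjective linear isometry (unitary) from 𝒟_{V*} onto 𝒟_{V₁*} ⊕ 𝒟_{V₂*}. -/

import Mathlib

open ContinuousLinearMap

section Aux

variable {H : Type*} [NormedAddCommGroup H] [InnerProductSpace ℂ H] [CompleteSpace H]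

private lemma appEq {A B : H →L[ℂ] H} (hAB : A = B) (x : H) : A x = B x := by rw [hAB]

private lemma isom_norm (W : H →L[ℂ] H) (hW : adjoint W ∘L W = 1) (x : H) :
    ‖W x‖ = ‖x‖ := by
  have h1 : (inner ℂ (W x) (W x) : ℂ) = inner ℂ x x := by
    rw [← ContinuousLinearMap.adjoint_inner_left]
    exact congrArg (fun y => (inner ℂ y x : ℂ)) (appEq hW x)
  rw [norm_eq_sqrt_re_inner (𝕜 := ℂ) (W x), norm_eq_sqrt_re_inner (𝕜 := ℂ) x, h1]

private lemma key_norm (W₁ W₂ P : H →L[ℂ] H)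
    (h₁ : adjoint W₁ ∘L W₁ = 1)
    (hP : P = (1 - W₁ * adjoint W₁) + W₁ * ((1 - W₂ * adjoint W₂) * adjoint W₁)) (h : H) :
    ‖P h‖ ^ 2 = ‖(1 - W₁ ∘L adjoint W₁) h‖ ^ 2
      + ‖(1 - W₂ ∘L adjoint W₂) (adjoint W₁ h)‖ ^ 2 := by
  have hmul : adjoint W₁ * W₁ = 1 := h₁
  have hv1P1 : adjoint W₁ * (1 - W₁ * adjoint W₁) = 0 := by
    rw [mul_sub, mul_one, ← mul_assoc, hmul, one_mul, sub_self]
  have hz : P h = (1 - W₁ * adjoint W₁) h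
      + W₁ ((1 - W₂ * adjoint W₂) (adjoint W₁ h)) := appEq hP h
  have hW1P1 : adjoint W₁ ((1 - W₁ * adjoint W₁) h) = 0 := appEq hv1P1 h
  have horth : (inner ℂ ((1 - W₁ * adjoint W₁) h)
      (W₁ ((1 - W₂ * adjoint W₂) (adjoint W₁ h))) : ℂ) = 0 := by
    rw [← ContinuousLinearMap.adjoint_inner_left, hW1P1, inner_zero_left]
  have hnW : ‖W₁ ((1 - W₂ * adjoint W₂) (adjoint W₁ h))‖
      = ‖(1 - W₂ * adjoint W₂) (adjoint W₁ h)‖ := isom_norm W₁ h₁ _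
  have hpyth := norm_add_sq_eq_norm_sq_add_norm_sq_of_inner_eq_zero _ _ horth
  calc ‖P h‖ ^ 2
      = ‖(1 - W₁ * adjoint W₁) h + W₁ ((1 - W₂ * adjoint W₂) (adjoint W₁ h))‖ ^ 2 := by
        rw [hz]
    _ = ‖(1 - W₁ * adjoint W₁) h‖ ^ 2
        + ‖W₁ ((1 - W₂ * adjoint W₂) (adjoint W₁ h))‖ ^ 2 := by
        rw [pow_two, pow_two, pow_two, hpyth]
    _ = ‖(1 - W₁ ∘L adjoint W₁) h‖ ^ 2
        + ‖(1 - W₂ ∘L adjoint W₂) (adjoint W₁ h)‖ ^ 2 := by rw [hnW]; rfl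

end Aux

set_option maxHeartbeats 1000000

theorem stmt_1 {H : Type*} [NormedAddCommGroup H] [InnerProductSpace ℂ H] [CompleteSpace H]
    (q : ℂ) (hq : ‖q‖ = 1) (V₁ V₂ : H →L[ℂ] H)
    (hV₁ : adjoint V₁ ∘L V₁ = 1) (hV₂ : adjoint V₂ ∘L V₂ = 1)
    (hcomm : V₁ ∘L V₂ = q • (V₂ ∘L V₁)) :
    (∀ h : H,
      ‖(1 - (V₁ ∘L V₂) ∘L adjoint (V₁ ∘L V₂)) h‖ ^ 2
          = ‖(1 - V₁ ∘L adjoint V₁) (adjoint V₂ h)‖ ^ 2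
            + ‖(1 - V₂ ∘L adjoint V₂) h‖ ^ 2 ∧
      ‖(1 - (V₁ ∘L V₂) ∘L adjoint (V₁ ∘L V₂)) h‖ ^ 2
          = ‖(1 - V₁ ∘L adjoint V₁) h‖ ^ 2
            + ‖(1 - V₂ ∘L adjoint V₂) (adjoint V₁ h)‖ ^ 2) ∧
    ∃ Φ : (LinearMap.range ((1 : H →L[ℂ] H) - (V₁ ∘L V₂) ∘L adjoint (V₁ ∘L V₂))) ≃ₗᵢ[ℂ]
        WithLp 2 ((LinearMap.range ((1 : H →L[ℂ] H) - V₁ ∘L adjoint V₁))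
          × (LinearMap.range ((1 : H →L[ℂ] H) - V₂ ∘L adjoint V₂))),
      ∀ h : H,
        Φ ⟨(1 - (V₁ ∘L V₂) ∘L adjoint (V₁ ∘L V₂)) h, ⟨h, by rfl⟩⟩
          = (WithLp.equiv 2 _).symm
              (⟨(1 - V₁ ∘L adjoint V₁) h, ⟨h, by rfl⟩⟩,
               ⟨(1 - V₂ ∘L adjoint V₂) (adjoint V₁ h), ⟨adjoint V₁ h, by rfl⟩⟩) := by
  set v₁ := adjoint V₁ with hv₁def
  set v₂ := adjoint V₂ with hv₂def
  set P : H →L[ℂ] H := 1 - (V₁ ∘L V₂) ∘L adjoint (V₁ ∘L V₂) with hPdef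
  set P₁ : H →L[ℂ] H := 1 - V₁ ∘L v₁ with hP₁def
  set P₂ : H →L[ℂ] H := 1 - V₂ ∘L v₂ with hP₂def
  have hmul₁ : v₁ * V₁ = 1 := hV₁
  have hmul₂ : v₂ * V₂ = 1 := hV₂
  have hP₁m : P₁ = 1 - V₁ * v₁ := rfl
  have hP₂m : P₂ = 1 - V₂ * v₂ := rfl
  have hPm : P = 1 - (V₁ * V₂) * (v₂ * v₁) := by
    rw [hPdef, ContinuousLinearMap.adjoint_comp]; rfl
  have hdec : P = P₁ + V₁ * (P₂ * v₁) := by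
    rw [hPm, hP₁m, hP₂m]; noncomm_ring
  have hcomm' : V₁ * V₂ = q • (V₂ * V₁) := hcomm
  have hadj2 : v₂ * v₁ = (starRingEnd ℂ) q • (v₁ * v₂) := by
    have h0 := congrArg ContinuousLinearMap.adjoint hcomm
    rw [ContinuousLinearMap.adjoint_comp, map_smulₛₗ, ContinuousLinearMap.adjoint_comp] at h0
    exact h0
  have hswap : (V₁ * V₂) * (v₂ * v₁) = (V₂ * V₁) * (v₁ * v₂) := by
    rw [hcomm', hadj2, smul_mul_smul_comm]
    have hq1 : q * (starRingEnd ℂ) q = 1 := by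
      rw [RCLike.mul_conj, hq]; norm_num
    rw [hq1, one_smul]
  have hdec' : P = P₂ + V₂ * (P₁ * v₂) := by
    rw [hPm, hswap, hP₁m, hP₂m]; noncomm_ring
  -- basic operator identities
  have hP1V1 : P₁ * V₁ = 0 := by
    rw [hP₁m, sub_mul, one_mul, mul_assoc, hmul₁, mul_one, sub_self]
  have hv1P1 : v₁ * P₁ = 0 := by
    rw [hP₁m, mul_sub, mul_one, ← mul_assoc, hmul₁, one_mul, sub_self]
  have hP1P1 : P₁ * P₁ = P₁ := by
    rw [hP₁m, show (1 - V₁ * v₁) * (1 - V₁ * v₁)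
      = 1 - V₁ * v₁ - V₁ * v₁ + V₁ * ((v₁ * V₁) * v₁) by noncomm_ring, hmul₁, one_mul]
    abel
  have hP2P2 : P₂ * P₂ = P₂ := by
    rw [hP₂m, show (1 - V₂ * v₂) * (1 - V₂ * v₂)
      = 1 - V₂ * v₂ - V₂ * v₂ + V₂ * ((v₂ * V₂) * v₂) by noncomm_ring, hmul₂, one_mul]
    abel
  have hVV : (v₂ * v₁) * (V₁ * V₂) = 1 := by
    rw [mul_assoc, ← mul_assoc v₁, hmul₁, one_mul, hmul₂]
  have hPP : P * P = P := by
    rw [hPm, show (1 - (V₁ * V₂) * (v₂ * v₁)) * (1 - (V₁ * V₂) * (v₂ * v₁))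
      = 1 - (V₁ * V₂) * (v₂ * v₁) - (V₁ * V₂) * (v₂ * v₁)
        + (V₁ * V₂) * (((v₂ * v₁) * (V₁ * V₂)) * (v₂ * v₁)) by noncomm_ring, hVV, one_mul]
    abel
  have hP1P : P₁ * P = P₁ := by
    have hP1A : P₁ * ((V₁ * V₂) * (v₂ * v₁)) = 0 := by
      rw [show P₁ * ((V₁ * V₂) * (v₂ * v₁)) = (P₁ * V₁) * (V₂ * (v₂ * v₁)) by noncomm_ring,
        hP1V1, zero_mul]
    rw [hPm, mul_sub, mul_one, hP1A, sub_zero]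
  have hv1P : v₁ * P = P₂ * v₁ := by
    have hv1A : v₁ * ((V₁ * V₂) * (v₂ * v₁)) = (V₂ * v₂) * v₁ := by
      rw [show v₁ * ((V₁ * V₂) * (v₂ * v₁)) = (v₁ * V₁) * (V₂ * (v₂ * v₁)) by noncomm_ring,
        hmul₁, one_mul]
      noncomm_ring
    rw [hPm, mul_sub, mul_one, hv1A, hP₂m]
    noncomm_ring
  have hPP1 : P * P₁ = P₁ := by
    have hAP1 : ((V₁ * V₂) * (v₂ * v₁)) * P₁ = 0 := by
      rw [show ((V₁ * V₂) * (v₂ * v₁)) * P₁ = ((V₁ * V₂) * v₂) * (v₁ * P₁) by noncomm_ring,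
        hv1P1, mul_zero]
    rw [hPm, sub_mul, one_mul, hAP1, sub_zero]
  have hPV1 : P * V₁ = V₁ * P₂ := by
    have hAV1 : ((V₁ * V₂) * (v₂ * v₁)) * V₁ = V₁ * (V₂ * v₂) := by
      rw [show ((V₁ * V₂) * (v₂ * v₁)) * V₁ = ((V₁ * V₂) * v₂) * (v₁ * V₁) by noncomm_ring,
        hmul₁, mul_one]
      noncomm_ring
    rw [hPm, sub_mul, one_mul, hAV1, hP₂m]
    noncomm_ring
  -- fixed point lemmas
  have hPfix : ∀ x : H, x ∈ LinearMap.range (P : H →ₗ[ℂ] H) → P x = x := by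
    intro x hx
    obtain ⟨y, rfl⟩ := LinearMap.mem_range.mp hx
    exact appEq hPP y
  have hP1fix : ∀ x : H, x ∈ LinearMap.range (P₁ : H →ₗ[ℂ] H) → P₁ x = x := by
    intro x hx
    obtain ⟨y, rfl⟩ := LinearMap.mem_range.mp hx
    exact appEq hP1P1 y
  have hP2fix : ∀ x : H, x ∈ LinearMap.range (P₂ : H →ₗ[ℂ] H) → P₂ x = x := by
    intro x hx
    obtain ⟨y, rfl⟩ := LinearMap.mem_range.mp hx
    exact appEq hP2P2 y
  -- the two norm identities
  have key2 : ∀ h : H, ‖P h‖ ^ 2 = ‖P₁ h‖ ^ 2 + ‖P₂ (v₁ h)‖ ^ 2 := by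
    intro h
    rw [hP₁def, hP₂def, hv₁def]
    exact key_norm V₁ V₂ P hV₁ (by rw [hdec, hP₁m, hP₂m, hv₁def, hv₂def]) h
  have key1 : ∀ h : H, ‖P h‖ ^ 2 = ‖P₁ (v₂ h)‖ ^ 2 + ‖P₂ h‖ ^ 2 := by
    intro h
    rw [hP₁def, hP₂def, hv₂def]
    exact (key_norm V₂ V₁ P hV₂ (by rw [hdec', hP₁m, hP₂m, hv₁def, hv₂def]) h).trans
      (add_comm _ _)
  refine ⟨fun h => ⟨key1 h, key2 h⟩, ?_⟩
  -- construct the unitary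
  set S := LinearMap.range (P : H →ₗ[ℂ] H) with hSdef
  set S₁ := LinearMap.range (P₁ : H →ₗ[ℂ] H) with hS₁def
  set S₂ := LinearMap.range (P₂ : H →ₗ[ℂ] H) with hS₂def
  have toF_mem₁ : ∀ x : H, P₁ x ∈ S₁ := fun x => LinearMap.mem_range.mpr ⟨x, rfl⟩
  have toF_mem₂ : ∀ x : H, P₂ (v₁ x) ∈ S₂ := fun x => LinearMap.mem_range.mpr ⟨v₁ x, rfl⟩
  have inv_mem : ∀ (a : S₁) (b : S₂), (a : H) + V₁ (b : H) ∈ S := by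
    intro a b
    refine LinearMap.mem_range.mpr ⟨(a : H) + V₁ (b : H), ?_⟩
    have ha : P (a : H) = (a : H) := by
      have h1 : P (P₁ (a : H)) = P₁ (a : H) := appEq hPP1 (a : H)
      rw [← hP1fix _ a.2, h1]
    have hb : P (V₁ (b : H)) = V₁ (b : H) := by
      have h1 : P (V₁ (b : H)) = V₁ (P₂ (b : H)) := appEq hPV1 (b : H)
      rw [h1, hP2fix _ b.2]
    rw [map_add, ContinuousLinearMap.coe_coe, ha, hb]
  set toF : S → WithLp 2 (S₁ × S₂) := fun x =>
    (WithLp.equiv 2 (S₁ × S₂)).symm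
      (⟨P₁ x.1, toF_mem₁ x.1⟩, ⟨P₂ (v₁ x.1), toF_mem₂ x.1⟩) with htoF
  set invF : WithLp 2 (S₁ × S₂) → S := fun p =>
    ⟨(((WithLp.equiv 2 (S₁ × S₂)) p).1 : H) + V₁ (((WithLp.equiv 2 (S₁ × S₂)) p).2 : H),
      inv_mem _ _⟩ with hinvF
  have hleft : Function.LeftInverse invF toF := by
    intro x
    apply Subtype.ext
    simp only [htoF, hinvF, Equiv.apply_symm_apply]
    have h1 : P x.1 = P₁ x.1 + V₁ (P₂ (v₁ x.1)) := appEq hdec x.1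
    rw [← h1, hPfix x.1 x.2]
  have hright : Function.RightInverse invF toF := by
    intro p
    simp only [htoF, hinvF]
    rw [Equiv.symm_apply_eq]
    set a := ((WithLp.equiv 2 (S₁ × S₂)) p).1 with hadef
    set b := ((WithLp.equiv 2 (S₁ × S₂)) p).2 with hbdef
    have h1 : P₁ ((a : H) + V₁ (b : H)) = (a : H) := by
      have hb0 : P₁ (V₁ (b : H)) = 0 := appEq hP1V1 (b : H)
      rw [map_add, hb0, add_zero, hP1fix _ a.2]
    have h2 : P₂ (v₁ ((a : H) + V₁ (b : H))) = (b : H) := by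
      have h3 : v₁ (a : H) = 0 := by
        rw [← hP1fix _ a.2]
        exact appEq hv1P1 (a : H)
      have h5 : v₁ (V₁ (b : H)) = (b : H) := appEq hmul₁ (b : H)
      rw [map_add, h3, h5, map_add, map_zero, zero_add, hP2fix _ b.2]
    exact Prod.ext (Subtype.ext h1) (Subtype.ext h2)
  have hmap_add : ∀ x y : S, toF (x + y) = toF x + toF y := by
    intro x y
    simp only [htoF]
    rw [WithLp.equiv_symm_apply, ← WithLp.toLp_add]
    apply congrArg
    refine Prod.ext (Subtype.ext ?_) (Subtype.ext ?_)
    · show P₁ ((x + y : S) : H) = P₁ x.1 + P₁ y.1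
      rw [Submodule.coe_add, map_add]
    · show P₂ (v₁ ((x + y : S) : H)) = P₂ (v₁ x.1) + P₂ (v₁ y.1)
      rw [Submodule.coe_add, map_add, map_add]
  have hmap_smul : ∀ (c : ℂ) (x : S), toF (c • x) = c • toF x := by
    intro c x
    simp only [htoF]
    rw [WithLp.equiv_symm_apply, ← WithLp.toLp_smul]
    apply congrArg
    refine Prod.ext (Subtype.ext ?_) (Subtype.ext ?_)
    · show P₁ ((c • x : S) : H) = c • P₁ x.1
      rw [Submodule.coe_smul, map_smul]
    · show P₂ (v₁ ((c • x : S) : H)) = c • P₂ (v₁ x.1)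
      rw [Submodule.coe_smul, map_smul, map_smul]
  have hnorm : ∀ x : S, ‖toF x‖ = ‖x‖ := by
    intro x
    have hsq : ‖toF x‖ ^ 2 = ‖(x : H)‖ ^ 2 := by
      rw [htoF, WithLp.prod_norm_sq_eq_of_L2]
      show ‖P₁ x.1‖ ^ 2 + ‖P₂ (v₁ x.1)‖ ^ 2 = ‖(x : H)‖ ^ 2
      rw [← key2 x.1, hPfix x.1 x.2]
    have := congrArg Real.sqrt hsq
    rwa [Real.sqrt_sq (norm_nonneg _), Real.sqrt_sq (norm_nonneg _)] at this
  refine ⟨⟨⟨⟨⟨toF, hmap_add⟩, hmap_smul⟩, invF, hleft, hright⟩, hnorm⟩, ?_⟩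
  intro h
  show toF ⟨P h, ⟨h, rfl⟩⟩ = _
  rw [htoF]
  apply congrArg
  have e1 : P₁ (P h) = P₁ h := appEq hP1P h
  have e2 : P₂ (v₁ (P h)) = P₂ (v₁ h) := by
    have h7 : v₁ (P h) = P₂ (v₁ h) := appEq hv1P h
    rw [h7]
    exact appEq hP2P2 (v₁ h)
  exact Prod.ext (Subtype.ext e1) (Subtype.ext e2)
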